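/- Let F be a finite field with q elements and n ≥ 1. Consider the equivalence relation on M_n(F) defined by A ∼ B if and only if there exist P, Q ∈ M_n(F) with det P = det Q = 1 such that A = P B Q. Then the number of equivalence classes (i.e., the cardinality of the double quotient SL_n(F) \ M_n(F) / SL_n(F)) is exactly n + q - 1. -/

import Mathlib

open Matrix

namespace Stmt15Aux

variable {F : Type*} [Field F] [Fintype F] {n : ℕ}

abbrev rel (F : Type*) [Field F] (n : ℕ) :
    Matrix (Fin n) (Fin n) F → Matrix (Fin n) (Fin n) F → Prop :=
  fun A B => ∃ P Q : Matrix (Fin n) (Fin n) F, P.det = 1 ∧ Q.det = 1 ∧ A = P * B * Q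

/-- Reduction to a diagonal matrix with determinant-one (transvection) factors. -/
lemma exists_diag (A : Matrix (Fin n) (Fin n) F) :
    ∃ d : Fin n → F, Quot.mk (rel F n) A = Quot.mk (rel F n) (Matrix.diagonal d) ∧
      A.det = ∏ i, d i ∧ A.rank = (Matrix.diagonal d).rank := by
  classical
  obtain ⟨L, L', d, hd⟩ := Matrix.Pivot.exists_list_transvec_mul_diagonal_mul_list_transvec A
  have hdetL : ((L.map Matrix.TransvectionStruct.toMatrix).prod : Matrix (Fin n) (Fin n) F).det = 1 :=
    Matrix.TransvectionStruct.det_toMatrix_prod L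
  have hdetL' : ((L'.map Matrix.TransvectionStruct.toMatrix).prod : Matrix (Fin n) (Fin n) F).det = 1 :=
    Matrix.TransvectionStruct.det_toMatrix_prod L'
  refine ⟨d, Quot.sound ⟨_, _, hdetL, hdetL', hd⟩, ?_, ?_⟩
  · rw [hd, Matrix.det_mul, Matrix.det_mul, hdetL, hdetL', one_mul, mul_one, Matrix.det_diagonal]
  · rw [hd, Matrix.rank_mul_eq_left_of_isUnit_det _ _ (by rw [hdetL']; exact isUnit_one),
      Matrix.rank_mul_eq_right_of_isUnit_det _ _ (by rw [hdetL]; exact isUnit_one)]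

/-- Rank of a non-invertible matrix is < n. -/
lemma rank_lt (A : Matrix (Fin n) (Fin n) F) (h : ¬ IsUnit A.det) : A.rank < n := by
  classical
  obtain ⟨d, -, hdet, hrank⟩ := exists_diag A
  have hzero : ∃ i, d i = 0 := by
    by_contra hc
    push_neg at hc
    exact h (hdet ▸ (IsUnit.mk0 _ (Finset.prod_ne_zero_iff.2 fun i _ => hc i)))
  obtain ⟨i₀, hi₀⟩ := hzero
  rw [hrank, Matrix.rank_diagonal]
  calc Fintype.card {i // d i ≠ 0} < Fintype.card (Fin n) :=
        Fintype.card_subtype_lt (x := i₀) (by simp [hi₀])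
    _ = n := Fintype.card_fin n

open Classical in
/-- The complete invariant. -/
noncomputable def φ (A : Matrix (Fin n) (Fin n) F) : Fin n ⊕ Fˣ :=
  if h : IsUnit A.det then Sum.inr h.unit else Sum.inl ⟨A.rank, rank_lt A h⟩

lemma φ_invariant (A B : Matrix (Fin n) (Fin n) F) (h : rel F n A B) :
    φ A = φ B := by
  classical
  obtain ⟨P, Q, hP, hQ, rfl⟩ := h
  have hd : (P * B * Q).det = B.det := by
    rw [Matrix.det_mul, Matrix.det_mul, hP, hQ, one_mul, mul_one]
  have hr : (P * B * Q).rank = B.rank := by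
    rw [Matrix.rank_mul_eq_left_of_isUnit_det _ _ (by rw [hQ]; exact isUnit_one),
      Matrix.rank_mul_eq_right_of_isUnit_det _ _ (by rw [hP]; exact isUnit_one)]
  by_cases hB : IsUnit B.det
  · have hB' : IsUnit (P * B * Q).det := hd ▸ hB
    simp only [φ, dif_pos hB, dif_pos hB']
    exact congrArg _ (Units.ext (by rw [IsUnit.unit_spec, IsUnit.unit_spec, hd]))
  · have hB' : ¬ IsUnit (P * B * Q).det := hd ▸ hB
    simp only [φ, dif_neg hB, dif_neg hB']
    exact congrArg _ (Fin.ext (by simpa using hr))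

/-- Normal forms. -/
noncomputable def nf (hn : 1 ≤ n) : Fin n ⊕ Fˣ → Matrix (Fin n) (Fin n) F
  | Sum.inl r => Matrix.diagonal (fun i => if (i : ℕ) < (r : ℕ) then 1 else 0)
  | Sum.inr u => Matrix.diagonal (fun i => if i = (⟨0, hn⟩ : Fin n) then (u : F) else 1)

/-- Scaling a diagonal matrix by determinant-one diagonal. -/
lemma mk_diag_scale (c d : Fin n → F) (hc : ∏ i, c i = 1) :
    Quot.mk (rel F n) (Matrix.diagonal (fun i => c i * d i))
      = Quot.mk (rel F n) (Matrix.diagonal d) := by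
  apply Quot.sound
  refine ⟨Matrix.diagonal c, 1, by rw [Matrix.det_diagonal]; exact hc, Matrix.det_one, ?_⟩
  rw [Matrix.mul_one, Matrix.diagonal_mul_diagonal]

/-- Scaling by nonzero scalars when the diagonal has a zero entry. -/
lemma mk_diag_scale' (c d : Fin n → F) (hc : ∀ i, c i ≠ 0) (i₀ : Fin n) (h0 : d i₀ = 0) :
    Quot.mk (rel F n) (Matrix.diagonal (fun i => c i * d i))
      = Quot.mk (rel F n) (Matrix.diagonal d) := by
  classical
  set k := (∏ i, c i)⁻¹ with hk
  have hprod : ∏ i, c i ≠ 0 := Finset.prod_ne_zero_iff.2 fun i _ => hc i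
  set c' : Fin n → F := fun i => (if i = i₀ then k else 1) * c i with hc'
  have hval : (fun i => c' i * d i) = fun i => c i * d i := by
    funext i
    by_cases h : i = i₀
    · subst h; simp [hc', h0]
    · simp [hc', h]
  have hcprod : ∏ i, c' i = 1 := by
    rw [hc', Finset.prod_mul_distrib, Finset.prod_ite_eq' Finset.univ i₀ (fun _ => k)]
    simp [hk, inv_mul_cancel₀ hprod]
  rw [← hval]
  exact mk_diag_scale c' d hcprod

/-- Permuting the diagonal entries. -/
lemma mk_diag_perm (hn : 1 ≤ n) (d : Fin n → F) (σ : Equiv.Perm (Fin n)) :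
    Quot.mk (rel F n) (Matrix.diagonal (d ∘ σ)) = Quot.mk (rel F n) (Matrix.diagonal d) := by
  classical
  have i₀ : Fin n := ⟨0, hn⟩
  have hs2 : ((Equiv.Perm.sign σ : ℤ) : F) * ((Equiv.Perm.sign σ : ℤ) : F) = 1 := by
    rw [← Int.cast_mul, ← Units.val_mul, Int.units_mul_self, Units.val_one, Int.cast_one]
  have hεprod : ∏ i, (if i = i₀ then ((Equiv.Perm.sign σ : ℤ) : F) else 1)
      = ((Equiv.Perm.sign σ : ℤ) : F) := by
    rw [Finset.prod_ite_eq' Finset.univ i₀ (fun _ => ((Equiv.Perm.sign σ : ℤ) : F))]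
    simp
  have hsign : ∀ τ : Equiv.Perm (Fin n),
      (τ.permMatrix F).det = ((Equiv.Perm.sign τ : ℤ) : F) := by
    intro τ
    simp [Matrix.det_permutation]
  apply Quot.sound
  refine ⟨σ.permMatrix F
      * Matrix.diagonal (fun i => if i = i₀ then ((Equiv.Perm.sign σ : ℤ) : F) else 1),
    Matrix.diagonal (fun i => if i = i₀ then ((Equiv.Perm.sign σ : ℤ) : F) else 1)
      * (σ⁻¹).permMatrix F, ?_, ?_, ?_⟩
  · rw [Matrix.det_mul, hsign, Matrix.det_diagonal, hεprod, hs2]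
  · rw [Matrix.det_mul, Matrix.det_diagonal, hεprod, hsign, Equiv.Perm.sign_inv, hs2]
  · have hmid : Matrix.diagonal (fun i => if i = i₀ then ((Equiv.Perm.sign σ : ℤ) : F) else 1)
        * Matrix.diagonal d
        * Matrix.diagonal (fun i => if i = i₀ then ((Equiv.Perm.sign σ : ℤ) : F) else 1)
        = Matrix.diagonal d := by
      rw [Matrix.diagonal_mul_diagonal, Matrix.diagonal_mul_diagonal]
      have hfun2 : (fun i => (if i = i₀ then ((Equiv.Perm.sign σ : ℤ) : F) else 1) * d i
          * (if i = i₀ then ((Equiv.Perm.sign σ : ℤ) : F) else 1)) = d := by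
        funext i
        by_cases h : i = i₀
        · rw [if_pos h]
          linear_combination d i * hs2
        · rw [if_neg h, one_mul, mul_one]
      exact congrArg _ hfun2
    calc Matrix.diagonal (d ∘ σ)
        = (Matrix.diagonal d).submatrix σ σ := (Matrix.submatrix_diagonal_equiv d σ).symm
      _ = σ.permMatrix F * Matrix.diagonal d * (σ⁻¹).permMatrix F := by
          rw [Equiv.Perm.permMatrix, Equiv.Perm.permMatrix, PEquiv.toMatrix_toPEquiv_mul,
            PEquiv.mul_toMatrix_toPEquiv, Matrix.submatrix_submatrix,
            show ⇑(Equiv.symm σ⁻¹) = ⇑σ from rfl]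
          congr
      _ = σ.permMatrix F
            * ((Matrix.diagonal fun i => if i = i₀ then ((Equiv.Perm.sign σ : ℤ) : F) else 1)
              * Matrix.diagonal d
              * (Matrix.diagonal fun i => if i = i₀ then ((Equiv.Perm.sign σ : ℤ) : F) else 1))
            * (σ⁻¹).permMatrix F := by rw [hmid]
      _ = _ := by simp only [Matrix.mul_assoc]

/-- Every matrix is equivalent to its normal form. -/
lemma mk_eq_nf (hn : 1 ≤ n) (A : Matrix (Fin n) (Fin n) F) :
    Quot.mk (rel F n) A = Quot.mk (rel F n) (nf hn (φ A)) := by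
  classical
  obtain ⟨d, hmk, hdet, hrank⟩ := exists_diag A
  by_cases h : IsUnit A.det
  · have hd0 : ∀ i, d i ≠ 0 := by
      intro i hi
      rw [hdet] at h
      exact h.ne_zero (Finset.prod_eq_zero (Finset.mem_univ i) hi)
    have hfun : (fun i : Fin n => if i = (⟨0, hn⟩ : Fin n) then (h.unit : F) else 1)
        = fun i => ((if i = (⟨0, hn⟩ : Fin n) then A.det else 1) * (d i)⁻¹) * d i := by
      funext i
      rw [mul_assoc, inv_mul_cancel₀ (hd0 i), mul_one, IsUnit.unit_spec]
    have hnfeq : nf hn (φ A) = Matrix.diagonal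
        (fun i => ((if i = (⟨0, hn⟩ : Fin n) then A.det else 1) * (d i)⁻¹) * d i) := by
      simp only [φ, dif_pos h, nf]
      exact congrArg _ hfun
    rw [hnfeq, hmk]
    refine (mk_diag_scale (fun i => (if i = (⟨0, hn⟩ : Fin n) then A.det else 1) * (d i)⁻¹) d ?_).symm
    rw [Finset.prod_mul_distrib,
      Finset.prod_ite_eq' Finset.univ (⟨0, hn⟩ : Fin n) (fun _ => A.det)]
    simp only [Finset.mem_univ, if_true, Finset.prod_const_one, mul_one]
    rw [hdet, ← Finset.prod_mul_distrib]
    exact Finset.prod_eq_one fun i _ => mul_inv_cancel₀ (hd0 i)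
  · -- singular case
    set r : ℕ := A.rank with hr
    have hrn : r < n := rank_lt A h
    -- cardinalities
    have hcard1 : Fintype.card {i : Fin n // (i : ℕ) < r} = r := by
      have e : {i : Fin n // (i : ℕ) < r} ≃ Fin r :=
        { toFun := fun i => ⟨i.1.1, i.2⟩
          invFun := fun j => ⟨⟨j.1, j.2.trans hrn⟩, j.2⟩
          left_inv := fun ⟨⟨v, hv⟩, h2⟩ => rfl
          right_inv := fun ⟨v, hv⟩ => rfl }
      rw [Fintype.card_congr e, Fintype.card_fin]
    have hcard2 : Fintype.card {i : Fin n // d i ≠ 0} = r := by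
      rw [hrank, Matrix.rank_diagonal]
    -- the permutation matching supports
    have e1 : {i : Fin n // (i : ℕ) < r} ≃ {i : Fin n // d i ≠ 0} :=
      Fintype.equivOfCardEq (by rw [hcard1, hcard2])
    have e2 : {i : Fin n // ¬ (i : ℕ) < r} ≃ {i : Fin n // ¬ d i ≠ 0} :=
      Fintype.equivOfCardEq (by
        rw [Fintype.card_subtype_compl, Fintype.card_subtype_compl, hcard1, hcard2])
    set σ : Equiv.Perm (Fin n) := Equiv.subtypeCongr e1 e2 with hσ
    have hσprop : ∀ i : Fin n, ((i : ℕ) < r → d (σ i) ≠ 0) ∧ (¬ (i : ℕ) < r → d (σ i) = 0) := by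
      intro i
      constructor
      · intro hi
        have hv : σ i = (e1 ⟨i, hi⟩ : Fin n) := by
          rw [hσ]
          simp only [Equiv.subtypeCongr, Equiv.trans_apply, Equiv.sumCongr_apply]
          rw [Equiv.sumCompl_symm_apply_of_pos (p := fun x : Fin n => (x : ℕ) < r) hi]
          rfl
        rw [hv]
        exact (e1 ⟨i, hi⟩).2
      · intro hi
        have hv : σ i = (e2 ⟨i, hi⟩ : Fin n) := by
          rw [hσ]
          simp only [Equiv.subtypeCongr, Equiv.trans_apply, Equiv.sumCongr_apply]
          rw [Equiv.sumCompl_symm_apply_of_neg (p := fun x : Fin n => (x : ℕ) < r) hi]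
          rfl
        rw [hv]
        have h2 := (e2 ⟨i, hi⟩).2
        push_neg at h2
        exact h2
    have hfun : (fun i : Fin n => if (i : ℕ) < r then (1 : F) else 0)
        = fun i : Fin n => (if (i : ℕ) < r then (d (σ i))⁻¹ else 1) * (d ∘ σ) i := by
      funext i
      by_cases hi : (i : ℕ) < r
      · rw [if_pos hi, if_pos hi, Function.comp_apply,
          inv_mul_cancel₀ ((hσprop i).1 hi)]
      · rw [if_neg hi, if_neg hi, Function.comp_apply, (hσprop i).2 hi, mul_zero]
    have hnf : nf hn (φ A) = Matrix.diagonal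
        (fun i : Fin n => (if (i : ℕ) < r then (d (σ i))⁻¹ else 1) * (d ∘ σ) i) := by
      simp only [φ, dif_neg h, nf]
      exact congrArg _ hfun
    rw [hmk, hnf]
    have step1 : Quot.mk (rel F n) (Matrix.diagonal
          (fun i : Fin n => (if (i : ℕ) < r then (d (σ i))⁻¹ else 1) * (d ∘ σ) i))
        = Quot.mk (rel F n) (Matrix.diagonal (d ∘ σ)) := by
      apply mk_diag_scale' _ _ (fun i => by
          by_cases hi : (i : ℕ) < r
          · rw [if_pos hi]; exact inv_ne_zero ((hσprop i).1 hi)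
          · rw [if_neg hi]; exact one_ne_zero)
        (⟨r, hrn⟩ : Fin n)
      exact (hσprop ⟨r, hrn⟩).2 (lt_irrefl r)
    rw [step1, mk_diag_perm hn d σ]

/-- The invariant of the normal form. -/
lemma φ_nf (hn : 1 ≤ n) (x : Fin n ⊕ Fˣ) : φ (nf hn x : Matrix (Fin n) (Fin n) F) = x := by
  classical
  cases x with
  | inr u =>
      have hdet : (nf hn (Sum.inr u) : Matrix (Fin n) (Fin n) F).det = (u : F) := by
        rw [nf, Matrix.det_diagonal, Finset.prod_ite_eq' Finset.univ (⟨0, hn⟩ : Fin n)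
          (fun _ => (u : F))]
        simp
      have h : IsUnit (nf hn (Sum.inr u) : Matrix (Fin n) (Fin n) F).det := by
        rw [hdet]; exact u.isUnit
      simp only [φ, dif_pos h]
      exact congrArg _ (Units.ext (by rw [IsUnit.unit_spec, hdet]))
  | inl r =>
      have hdet : (nf hn (Sum.inl r) : Matrix (Fin n) (Fin n) F).det = 0 := by
        rw [nf, Matrix.det_diagonal]
        apply Finset.prod_eq_zero (Finset.mem_univ (⟨n - 1, by omega⟩ : Fin n))
        have : ¬ ((⟨n - 1, by omega⟩ : Fin n) : ℕ) < (r : ℕ) := by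
          have := r.2; simp only []; omega
        rw [if_neg this]
      have h : ¬ IsUnit (nf hn (Sum.inl r) : Matrix (Fin n) (Fin n) F).det := by
        rw [hdet]; exact not_isUnit_zero
      simp only [φ, dif_neg h]
      have hrank : (nf hn (Sum.inl r) : Matrix (Fin n) (Fin n) F).rank = (r : ℕ) := by
        rw [nf, Matrix.rank_diagonal]
        have hiff : ∀ i : Fin n,
            ((if (i : ℕ) < (r : ℕ) then (1 : F) else 0) ≠ 0) ↔ (i : ℕ) < (r : ℕ) := by
          intro i
          by_cases hi : (i : ℕ) < (r : ℕ) <;> simp [hi]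
        rw [Fintype.card_congr (Equiv.subtypeEquivRight hiff)]
        have e : {i : Fin n // (i : ℕ) < (r : ℕ)} ≃ Fin (r : ℕ) :=
          { toFun := fun i => ⟨i.1.1, i.2⟩
            invFun := fun j => ⟨⟨j.1, j.2.trans r.2⟩, j.2⟩
            left_inv := fun ⟨⟨v, hv⟩, h2⟩ => rfl
            right_inv := fun ⟨v, hv⟩ => rfl }
        rw [Fintype.card_congr e, Fintype.card_fin]
      exact congrArg _ (Fin.ext (by simpa using hrank))

end Stmt15Aux

theorem stmt15 {F : Type*} [Field F] [Fintype F] {n : ℕ} (hn : 1 ≤ n) :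
    Nat.card (Quot (fun A B : Matrix (Fin n) (Fin n) F =>
        ∃ P Q : Matrix (Fin n) (Fin n) F, P.det = 1 ∧ Q.det = 1 ∧ A = P * B * Q)) =
      n + Fintype.card F - 1 := by
  classical
  have hbij : Function.Bijective
      (Quot.lift (Stmt15Aux.φ (F := F) (n := n)) (Stmt15Aux.φ_invariant)) := by
    constructor
    · intro x y
      induction x using Quot.ind with | _ a =>
      induction y using Quot.ind with | _ b =>
      intro hab
      have hab' : Stmt15Aux.φ a = Stmt15Aux.φ b := hab
      rw [show (Quot.mk _ a : Quot (Stmt15Aux.rel F n)) = Quot.mk _ (Stmt15Aux.nf hn (Stmt15Aux.φ a))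
          from Stmt15Aux.mk_eq_nf hn a,
        show (Quot.mk _ b : Quot (Stmt15Aux.rel F n)) = Quot.mk _ (Stmt15Aux.nf hn (Stmt15Aux.φ b))
          from Stmt15Aux.mk_eq_nf hn b, hab']
    · intro x
      exact ⟨Quot.mk _ (Stmt15Aux.nf hn x), Stmt15Aux.φ_nf hn x⟩
  rw [Nat.card_eq_of_bijective _ hbij, Nat.card_eq_fintype_card, Fintype.card_sum,
    Fintype.card_fin, Fintype.card_units]
  have : 1 ≤ Fintype.card F := Fintype.card_pos
  omega
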